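/- Let φ₁, ..., φ_M : ℝ → ℝ be continuous functions, with φ_i odd for i = 1, ..., M-1, satisfying a polynomial growth bound |φ_i(t)| ≤ C(1 + |t|^q). Suppose that for every a > 0 and every Lipschitz function ψ ≥ 1 on [-a,a], the conditions ∫_{-a}^{a} φ_i(t) ψ(t) dt = 0 for i = 1, ..., M-1 imply ∫_{-a}^{a} φ_M(t) ψ(t) dt = 0. Then φ₁, ..., φ_M are linearly dependent as functions on ℝ. -/

import Mathlib

open MeasureTheory Set

lemma oddIntZero {f : ℝ → ℝ} (hf : Continuous f) (ho : ∀ t, f (-t) = -f t) (a : ℝ) :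
    ∫ t in Icc (-a) a, f t = 0 := by
  rcases le_or_gt 0 a with ha | ha
  · have h1 : ∫ t in Icc (-a) a, f t = ∫ t in (-a)..a, f t := by
      rw [intervalIntegral.integral_of_le (by linarith), integral_Icc_eq_integral_Ioc]
    have h2 : ∫ t in (-a)..a, f (-t) = ∫ t in (-a)..a, f t := by
      rw [intervalIntegral.integral_comp_neg]; norm_num
    have h3 : ∫ t in (-a)..a, f (-t) = - ∫ t in (-a)..a, f t := by
      simp_rw [ho]; exact intervalIntegral.integral_neg
    rw [h1]; linarith
  · rw [Icc_eq_empty (by linarith), Measure.restrict_empty, integral_zero_measure]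

lemma hat_pos {h : ℝ → ℝ} (hc : Continuous h) {n t₀ : ℝ} (ht : t₀ ∈ Ioo (-n) n)
    (hpos : 0 < h t₀)
    (hz : ∀ f : ℝ → ℝ, (∃ K : NNReal, LipschitzWith K f) → (∃ B, ∀ t, |f t| ≤ B) →
      ∫ t in Icc (-n) n, h t * f t = 0) : False := by
  -- find δ with ball ⊆ Ioo and h > h t₀ / 2 on ball
  have hopen : IsOpen (Ioo (-n) n ∩ {t | h t₀ / 2 < h t}) :=
    isOpen_Ioo.inter (isOpen_lt continuous_const hc)
  have hmem : t₀ ∈ Ioo (-n) n ∩ {t | h t₀ / 2 < h t} := ⟨ht, by simpa using by linarith⟩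
  obtain ⟨δ, hδ, hball⟩ := Metric.isOpen_iff.1 hopen t₀ hmem
  set δ' : ℝ := δ / 2 with hδ'
  have hδ'pos : 0 < δ' := by positivity
  set f : ℝ → ℝ := fun t => max 0 (δ' - |t - t₀|) with hfdef
  have hflip : LipschitzWith 1 f := by
    apply LipschitzWith.of_dist_le_mul
    intro x y
    simp only [Real.dist_eq, one_mul, hfdef]
    calc |max 0 (δ' - |x - t₀|) - max 0 (δ' - |y - t₀|)|
        = |max (δ' - |x - t₀|) 0 - max (δ' - |y - t₀|) 0| := by
          rw [max_comm, max_comm (δ' - |y - t₀|)]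
      _ ≤ |(δ' - |x - t₀|) - (δ' - |y - t₀|)| := abs_max_sub_max_le_abs _ _ _
      _ = |abs (y - t₀) - abs (x - t₀)| := by ring_nf
      _ ≤ |(y - t₀) - (x - t₀)| := abs_abs_sub_abs_le_abs_sub _ _
      _ = |y - x| := by ring_nf
      _ = |x - y| := abs_sub_comm _ _
      _ ≤ ↑(1:NNReal) * |x - y| := by simp
  have hfcont : Continuous f := hflip.continuous
  have hfnonneg : ∀ t, 0 ≤ f t := fun t => le_max_left _ _
  have hfbdd : ∀ t, |f t| ≤ δ' := by
    intro t
    rw [abs_of_nonneg (hfnonneg t)]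
    exact max_le hδ'pos.le (by nlinarith [abs_nonneg (t - t₀)])
  have hfsupp : ∀ t, δ' ≤ |t - t₀| → f t = 0 := by
    intro t htt
    simp only [hfdef]
    exact max_eq_left (by linarith)
  have hballmem : ∀ t, |t - t₀| < δ → t ∈ Ioo (-n) n ∧ h t₀ / 2 < h t := by
    intro t htt
    have := hball (by simpa [Metric.mem_ball, Real.dist_eq] using htt)
    exact ⟨this.1, this.2⟩
  -- product nonneg on Icc(-n,n)
  have hprod : ∀ t, 0 ≤ h t * f t := by
    intro t
    rcases le_or_gt δ' |t - t₀| with hle | hlt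
    · rw [hfsupp t hle, mul_zero]
    · have := (hballmem t (by linarith)).2
      have : 0 ≤ h t := by linarith
      exact mul_nonneg this (hfnonneg t)
  have hint : IntegrableOn (fun t => h t * f t) (Icc (-n) n) := (hc.mul hfcont).integrableOn_Icc
  -- small interval
  set S : Set ℝ := Icc (t₀ - δ'/2) (t₀ + δ'/2) with hS
  have hSsub : S ⊆ Icc (-n) n := by
    intro t htS
    obtain ⟨h1, h2⟩ := htS
    have h3 : |t - t₀| < δ := by
      rw [abs_lt]; constructor <;> [linarith; linarith]
    have := (hballmem t h3).1
    exact ⟨this.1.le, this.2.le⟩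
  have hlb : ∀ t ∈ S, h t₀ / 2 * (δ'/2) ≤ h t * f t := by
    intro t htS
    obtain ⟨h1, h2⟩ := htS
    have habs : |t - t₀| ≤ δ'/2 := by rw [abs_le]; constructor <;> linarith
    have hf2 : δ'/2 ≤ f t := le_max_of_le_right (by linarith)
    have hh2 : h t₀ / 2 ≤ h t := ((hballmem t (by linarith)).2).le
    have := mul_le_mul hh2 hf2 (by positivity) (by linarith)
    linarith
  have hmono : ∫ t in S, h t * f t ≤ ∫ t in Icc (-n) n, h t * f t := by
    apply setIntegral_mono_set hint
    · exact Filter.Eventually.of_forall hprod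
    · exact HasSubset.Subset.eventuallyLE hSsub
  have hvol : (volume S).toReal = δ' := by
    rw [hS, Real.volume_Icc]
    rw [ENNReal.toReal_ofReal (by linarith)]
    ring
  have hge : h t₀ / 2 * (δ'/2) * δ' ≤ ∫ t in S, h t * f t := by
    have := setIntegral_ge_of_const_le (c := h t₀ / 2 * (δ'/2)) measurableSet_Icc
      (by rw [Real.volume_Icc]; exact ENNReal.ofReal_ne_top)
      hlb (hint.mono_set hSsub)
    rw [measureReal_def, ← hS, hvol, smul_eq_mul, mul_comm δ'] at this
    exact this
  have hzero := hz f ⟨1, hflip⟩ ⟨δ', hfbdd⟩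
  nlinarith [hge, hmono, mul_pos (mul_pos (by linarith : (0:ℝ) < h t₀ / 2) (by linarith : (0:ℝ) < δ'/2)) hδ'pos]

lemma vanish {h : ℝ → ℝ} (hc : Continuous h) {n : ℝ}
    (hz : ∀ f : ℝ → ℝ, (∃ K : NNReal, LipschitzWith K f) → (∃ B, ∀ t, |f t| ≤ B) →
      ∫ t in Icc (-n) n, h t * f t = 0) :
    ∀ t₀ ∈ Ioo (-n) n, h t₀ = 0 := by
  intro t₀ ht
  by_contra hne
  rcases lt_or_gt_of_ne hne with hlt | hlt
  · refine hat_pos hc.neg ht (by simpa using hlt) (fun f hf hb => ?_)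
    have := hz f hf hb
    simp only [Pi.neg_apply, neg_mul]
    rw [integral_neg, this, neg_zero]
  · exact hat_pos hc ht hlt hz

theorem stmt11 (M : ℕ) (φ : Fin (M + 1) → ℝ → ℝ)
    (hcont : ∀ i, Continuous (φ i))
    (hodd : ∀ i : Fin (M + 1), i ≠ Fin.last M → ∀ t, φ i (-t) = -(φ i t))
    (C q : ℝ) (hC : 0 < C) (hq : 1 ≤ q)
    (hgrowth : ∀ i, ∀ t : ℝ, |φ i t| ≤ C * (1 + |t| ^ q))
    (hyp : ∀ a : ℝ, 0 < a → ∀ ψ : ℝ → ℝ, (∃ K : NNReal, LipschitzWith K ψ) →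
      (∀ t, 1 ≤ ψ t) →
      (∀ i : Fin (M + 1), i ≠ Fin.last M → ∫ t in Icc (-a) a, φ i t * ψ t = 0) →
      ∫ t in Icc (-a) a, φ (Fin.last M) t * ψ t = 0) :
    ∃ c : Fin (M + 1) → ℝ, c ≠ 0 ∧ ∀ t : ℝ, ∑ i, c i * φ i t = 0 := by
  classical
  -- the submodule of bounded Lipschitz functions
  set V : Submodule ℝ (ℝ → ℝ) :=
    { carrier := {f | (∃ K : NNReal, LipschitzWith K f) ∧ ∃ B, ∀ t, |f t| ≤ B}
      add_mem' := by
        rintro f g ⟨⟨Kf, hKf⟩, ⟨Bf, hBf⟩⟩ ⟨⟨Kg, hKg⟩, ⟨Bg, hBg⟩⟩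
        refine ⟨⟨Kf + Kg, hKf.add hKg⟩, ⟨Bf + Bg, fun t => ?_⟩⟩
        exact (abs_add_le _ _).trans (add_le_add (hBf t) (hBg t))
      zero_mem' := ⟨⟨0, by simpa [Pi.zero_def] using (LipschitzWith.const (0:ℝ))⟩,
        ⟨0, fun t => by simp⟩⟩
      smul_mem' := by
        rintro c f ⟨⟨K, hK⟩, ⟨B, hB⟩⟩
        refine ⟨⟨‖c‖₊ * K, ?_⟩, ⟨|c| * B, fun t => ?_⟩⟩
        · exact (lipschitzWith_smul (β := ℝ) c).comp hK
        · simp only [Pi.smul_apply, smul_eq_mul, abs_mul]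
          exact mul_le_mul_of_nonneg_left (hB t) (abs_nonneg c) } with hVdef
  have hmemV : ∀ f : ℝ → ℝ,
      f ∈ V ↔ (∃ K : NNReal, LipschitzWith K f) ∧ ∃ B, ∀ t, |f t| ≤ B := fun f => Iff.rfl
  have hcontV : ∀ f : V, Continuous (f : ℝ → ℝ) := by
    rintro ⟨f, ⟨K, hK⟩, _⟩
    exact hK.continuous
  -- the key per-scale result
  have key : ∀ n : ℕ, ∃ c : Fin (M+1) → ℝ, c (Fin.last M) = -1 ∧
      ∀ t ∈ Ioo (-(n+1 : ℝ)) (n+1 : ℝ), ∑ i, c i * φ i t = 0 := by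
    intro n
    set a : ℝ := (n : ℝ) + 1 with ha
    have hapos : (0:ℝ) < a := by positivity
    have hint : ∀ (i) (f : ℝ → ℝ), Continuous f →
        IntegrableOn (fun t => φ i t * f t) (Icc (-a) a) :=
      fun i f hf => ((hcont i).mul hf).integrableOn_Icc
    have hoddint : ∀ i, i ≠ Fin.last M → ∫ t in Icc (-a) a, φ i t = 0 :=
      fun i hi => oddIntZero (hcont i) (hodd i hi) a
    have hlastint : ∫ t in Icc (-a) a, φ (Fin.last M) t = 0 := by
      have := hyp a hapos (fun _ => 1) ⟨0, LipschitzWith.const 1⟩ (fun t => le_refl 1)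
        (fun i hi => by simpa using hoddint i hi)
      simpa using this
    -- bundled integration functionals
    let lam : Fin (M+1) → V →ₗ[ℝ] ℝ := fun i =>
      { toFun := fun f => ∫ t in Icc (-a) a, φ i t * (f : ℝ → ℝ) t
        map_add' := by
          intro f g
          have h1 : (((f + g : V) : ℝ → ℝ)) = fun t => (f : ℝ → ℝ) t + (g : ℝ → ℝ) t := rfl
          simp only [h1]
          simp_rw [mul_add]
          exact integral_add (hint i _ (hcontV f)) (hint i _ (hcontV g))
        map_smul' := by
          intro c f
          have h1 : (((c • f : V) : ℝ → ℝ)) = fun t => c * (f : ℝ → ℝ) t := rfl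
          simp only [h1, RingHom.id_apply, smul_eq_mul]
          simp_rw [mul_left_comm (φ i _) c]
          exact integral_const_mul c _ }
    have hlamapp : ∀ (i) (f : V),
        lam i f = ∫ t in Icc (-a) a, φ i t * (f : ℝ → ℝ) t := fun i f => rfl
    -- kernel inclusion
    have hker : ⨅ i : Fin M, LinearMap.ker (lam i.castSucc) ≤
        LinearMap.ker (lam (Fin.last M)) := by
      intro f hf
      simp only [Submodule.mem_iInf, LinearMap.mem_ker] at hf ⊢
      obtain ⟨⟨K, hK⟩, ⟨B, hB⟩⟩ := f.2
      set ψ : ℝ → ℝ := fun t => (f : ℝ → ℝ) t + (B + 1) with hψ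
      have hψlip : LipschitzWith (K + 0) ψ := hK.add (LipschitzWith.const (B+1))
      have hψge : ∀ t, 1 ≤ ψ t := by
        intro t
        have := (abs_le.1 (hB t)).1
        simp only [hψ]
        linarith
    -- expansion of ∫ φ i ψ
      have hψint : ∀ i, ∫ t in Icc (-a) a, φ i t * ψ t =
          (∫ t in Icc (-a) a, φ i t * (f : ℝ → ℝ) t) + (B+1) * ∫ t in Icc (-a) a, φ i t := by
        intro i
        have h1 : ∀ t, φ i t * ψ t = φ i t * (f : ℝ → ℝ) t + (B+1) * φ i t := by
          intro t; simp only [hψ]; ring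
        simp_rw [h1]
        rw [integral_add (g := fun t => (B+1) * φ i t) (hint i _ (hcontV f)) ((continuous_const.mul (hcont i)).integrableOn_Icc),
          integral_const_mul]
      have hcond : ∀ i : Fin (M + 1), i ≠ Fin.last M →
          ∫ t in Icc (-a) a, φ i t * ψ t = 0 := by
        intro i hi
        obtain ⟨j, rfl⟩ := Fin.exists_castSucc_eq.2 hi
        have hfj := hf j
        rw [hlamapp] at hfj
        rw [hψint, hoddint _ hi, hfj]
        ring
      have := hyp a hapos ψ ⟨K + 0, hψlip⟩ hψge hcond
      rw [hψint, hlastint] at this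
      simpa [hlamapp] using this
    have hspan := mem_span_of_iInf_ker_le_ker (L := fun i : Fin M => lam i.castSucc) hker
    obtain ⟨c, hc⟩ := (Submodule.mem_span_range_iff_exists_fun ℝ).1 hspan
    -- pointwise identity on Ioo
    have hzero : ∀ t ∈ Ioo (-a) a,
        φ (Fin.last M) t - ∑ i : Fin M, c i * φ i.castSucc t = 0 := by
      apply vanish
      · exact (hcont _).sub (continuous_finset_sum _ fun i _ => continuous_const.mul (hcont _))
      · intro f hfl hfb
        have hfV : f ∈ V := ⟨hfl, hfb⟩
        have hfc : Continuous f := hfl.choose_spec.continuous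
        have h1 : ∀ t, (φ (Fin.last M) t - ∑ i : Fin M, c i * φ i.castSucc t) * f t
            = φ (Fin.last M) t * f t - ∑ i : Fin M, c i * (φ i.castSucc t * f t) := by
          intro t; rw [sub_mul, Finset.sum_mul]; congr 1; apply Finset.sum_congr rfl
          intro i _; ring
        simp_rw [h1]
        have hintsum : ∀ i : Fin M, IntegrableOn
            (fun t => c i * (φ i.castSucc t * f t)) (Icc (-a) a) :=
          fun i => (hint i.castSucc f hfc).const_mul _
        rw [integral_sub (hint _ f hfc) (integrable_finset_sum _ fun i _ => hintsum i),
          integral_finset_sum _ (fun i _ => hintsum i)]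
        have hthis := LinearMap.congr_fun hc ⟨f, hfV⟩
        simp only [LinearMap.coe_sum, Finset.sum_apply, LinearMap.smul_apply,
          smul_eq_mul, hlamapp] at hthis
        rw [sub_eq_zero, ← hthis]
        apply Finset.sum_congr rfl
        intro i _
        exact (integral_const_mul _ _).symm
    refine ⟨Fin.snoc c (-1), by simp, ?_⟩
    intro t ht
    have := hzero t ht
    rw [Fin.sum_univ_castSucc]
    simp only [Fin.snoc_castSucc, Fin.snoc_last]
    linarith [this]
  -- extract witnesses and stabilize
  choose w hwlast hw using key
  let T : ℕ → Submodule ℝ (Fin (M+1) → ℝ) := fun n =>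
    { carrier := {c | ∀ t ∈ Ioo (-(n+1:ℝ)) (n+1:ℝ), ∑ i, c i * φ i t = 0}
      add_mem' := by
        intro c d hcc hd t ht
        simp only [Pi.add_apply, add_mul, Finset.sum_add_distrib, hcc t ht, hd t ht, add_zero]
      zero_mem' := by intro t ht; simp
      smul_mem' := by
        intro r c hcc t ht
        simp only [Pi.smul_apply, smul_eq_mul, mul_assoc, ← Finset.mul_sum, hcc t ht, mul_zero] }
  have hTmem : ∀ (n : ℕ) (c : Fin (M+1) → ℝ),
      c ∈ T n ↔ ∀ t ∈ Ioo (-(n+1:ℝ)) (n+1:ℝ), ∑ i, c i * φ i t = 0 := fun n c => Iff.rfl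
  have hTanti : ∀ {m n : ℕ}, m ≤ n → T n ≤ T m := by
    intro m n hmn c hcc t ht
    refine (hTmem n c).1 hcc t ⟨?_, ?_⟩
    · have : ((m:ℝ)+1) ≤ (n:ℝ)+1 := by exact_mod_cast by omega
      have := ht.1; linarith
    · have : ((m:ℝ)+1) ≤ (n:ℝ)+1 := by exact_mod_cast by omega
      have := ht.2; linarith
  have hwT : ∀ n, w n ∈ T n := fun n => (hTmem n (w n)).2 (hw n)
  -- minimize the rank
  let r : ℕ → ℕ := fun n => Module.finrank ℝ (T n)
  let N : ℕ := Function.argmin r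
  have hrN : ∀ n, r N ≤ r n := fun n =>
    not_lt.1 (Function.not_lt_argmin r n)
  have hstab : ∀ n, N ≤ n → T n = T N := by
    intro n hn
    exact Submodule.eq_of_le_of_finrank_le (hTanti hn) (hrN n)
  refine ⟨w N, ?_, ?_⟩
  · intro h0
    have := hwlast N
    rw [h0] at this
    simp at this
  · intro t
    set n : ℕ := max N (Nat.ceil |t|) with hn
    have hwn : w N ∈ T n := by
      rw [hstab n (le_max_left _ _)]
      exact hwT N
    have htmem : t ∈ Ioo (-(n+1:ℝ)) (n+1:ℝ) := by
      have h1 : |t| ≤ (n : ℝ) := by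
        calc |t| ≤ (Nat.ceil |t| : ℝ) := Nat.le_ceil _
          _ ≤ (n : ℝ) := by exact_mod_cast le_max_right _ _
      have := abs_le.1 h1
      constructor <;> [linarith [this.1]; linarith [this.2]]
    exact (hTmem n (w N)).1 hwn t htmem
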